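/- The function φ(x) = ∫_{S^{n-1}} e^{x·ω} dω is strictly positive for all x ∈ ℝⁿ and depends only on |x|; moreover there exist constants 0 < c ≤ C such that c|x|^{-(n-1)/2} e^{|x|} ≤ φ(x) ≤ C|x|^{-(n-1)/2} e^{|x|} for |x| ≥ 1. -/

import Mathlib

open MeasureTheory

/-- The Yordanov–Zhang test function `φ(x) = ∫_{S^{n-1}} e^{x·ω} dω`. -/
noncomputable def phi (n : ℕ) (x : EuclideanSpace ℝ (Fin n)) : ℝ :=
  ∫ ω : Metric.sphere (0 : EuclideanSpace ℝ (Fin n)) 1,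
    Real.exp (inner ℝ x (ω : EuclideanSpace ℝ (Fin n))) ∂(volume.toSphere)

namespace YZaux
open MeasureTheory Set Metric Filter
open scoped Pointwise ENNReal

noncomputable section

section general
variable {E : Type*} [NormedAddCommGroup E] [InnerProductSpace ℝ E] [FiniteDimensional ℝ E]
  [MeasurableSpace E] [BorelSpace E]


variable {E : Type*} [NormedAddCommGroup E] [InnerProductSpace ℝ E] [FiniteDimensional ℝ E]
  [MeasurableSpace E] [BorelSpace E]

lemma mem_sphere_of_isometry (f : E ≃ₗᵢ[ℝ] E) (ω : sphere (0:E) 1) : f ω ∈ sphere (0:E) 1 := by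
  rw [mem_sphere_zero_iff_norm, f.norm_map]
  exact mem_sphere_zero_iff_norm.1 ω.2

/-- Induced measurable equiv of the unit sphere from a linear isometry equiv. -/
def sphereMap (f : E ≃ₗᵢ[ℝ] E) : sphere (0:E) 1 ≃ᵐ sphere (0:E) 1 where
  toFun := fun ω => ⟨f ω, mem_sphere_of_isometry f ω⟩
  invFun := fun ω => ⟨f.symm ω, mem_sphere_of_isometry f.symm ω⟩
  left_inv := fun ω => by ext; simp
  right_inv := fun ω => by ext; simp
  measurable_toFun := Measurable.subtype_mk <| (f.continuous.measurable).comp measurable_subtype_coe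
  measurable_invFun := Measurable.subtype_mk <|
    (f.symm.continuous.measurable).comp measurable_subtype_coe

lemma volume_preimage (f : E ≃ₗᵢ[ℝ] E) (B : Set E) : volume (f ⁻¹' B) = volume B := by
  have h : Measure.map (f.toHomeomorph.toMeasurableEquiv) volume = volume :=
    f.measurePreserving.map_eq
  calc volume (f ⁻¹' B) = volume ((f.toHomeomorph.toMeasurableEquiv) ⁻¹' B) := rfl
    _ = (Measure.map (f.toHomeomorph.toMeasurableEquiv) volume) B :=
        (MeasurableEquiv.map_apply _ _).symm
    _ = volume B := by rw [h]

lemma toSphere_map (f : E ≃ₗᵢ[ℝ] E) :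
    Measure.map (sphereMap f) (volume.toSphere) = volume.toSphere := by
  refine Measure.ext fun s hs => ?_
  rw [MeasurableEquiv.map_apply]
  have hps : MeasurableSet ((sphereMap f) ⁻¹' s) := (sphereMap f).measurable hs
  rw [Measure.toSphere_apply' _ hps, Measure.toSphere_apply' _ hs]
  congr 1
  have h1 : (Subtype.val '' ((sphereMap f) ⁻¹' s) : Set E) = f ⁻¹' (Subtype.val '' s) := by
    ext x
    constructor
    · rintro ⟨ω, hω, rfl⟩
      exact ⟨(sphereMap f) ω, hω, rfl⟩
    · rintro ⟨ω, hω, hfx⟩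
      have hx : x ∈ sphere (0:E) 1 := by
        have h2 : ‖f x‖ = 1 := by rw [← hfx]; exact mem_sphere_zero_iff_norm.1 ω.2
        rw [mem_sphere_zero_iff_norm]; rwa [f.norm_map] at h2
      refine ⟨⟨x, hx⟩, ?_, rfl⟩
      show (sphereMap f) ⟨x, hx⟩ ∈ s
      have h3 : (sphereMap f) ⟨x, hx⟩ = ω := by
        apply Subtype.ext; exact hfx.symm
      rw [h3]; exact hω
  rw [h1]
  have h2 : Ioo (0:ℝ) 1 • (f ⁻¹' (Subtype.val '' s)) = f ⁻¹' (Ioo (0:ℝ) 1 • (Subtype.val '' s)) := by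
    ext x
    simp only [Set.mem_smul, Set.mem_preimage]
    constructor
    · rintro ⟨r, hr, y, hy, rfl⟩
      exact ⟨r, hr, f y, hy, (f.map_smul r y).symm⟩
    · rintro ⟨r, hr, y, hy, hxy⟩
      refine ⟨r, hr, f.symm y, by simpa using hy, ?_⟩
      have hx : x = f.symm (r • y) := by
        have := congrArg f.symm hxy
        simpa using this.symm
      rw [hx, f.symm.map_smul]
  rw [h2, volume_preimage]


lemma integral_sphereMap (f : E ≃ₗᵢ[ℝ] E) (g : sphere (0:E) 1 → ℝ) :
    ∫ ω, g ((sphereMap f) ω) ∂(volume.toSphere) = ∫ ω, g ω ∂(volume.toSphere) := by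
  conv_rhs => rw [← toSphere_map f]
  exact (MeasureTheory.integral_map_equiv (sphereMap f) g).symm

lemma sphereMap_apply (f : E ≃ₗᵢ[ℝ] E) (ω : sphere (0:E) 1) :
    ((sphereMap f ω : sphere (0:E) 1) : E) = f ω := rfl

lemma integral_exp_inner_radial {x y : E} (h : ‖x‖ = ‖y‖) :
    ∫ ω : sphere (0:E) 1, Real.exp (inner ℝ x (ω : E)) ∂(volume.toSphere) =
    ∫ ω : sphere (0:E) 1, Real.exp (inner ℝ y (ω : E)) ∂(volume.toSphere) := by
  set f := Submodule.reflection (ℝ ∙ (x - y))ᗮ with hf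
  have hxy : f x = y := Submodule.reflection_sub h
  have key : ∀ ω : sphere (0:E) 1,
      Real.exp (inner ℝ x ((sphereMap f.symm) ω : E)) = Real.exp (inner ℝ y (ω : E)) := by
    intro ω
    rw [sphereMap_apply]
    congr 1
    calc (inner ℝ x (f.symm (ω : E)) : ℝ)
        = inner ℝ (f x) (f (f.symm (ω : E))) := (f.inner_map_map _ _).symm
      _ = inner ℝ y (ω : E) := by rw [hxy, f.apply_symm_apply]
  rw [← integral_sphereMap f.symm (fun ω => Real.exp (inner ℝ x (ω : E)))]
  exact integral_congr_ae (Filter.Eventually.of_forall key)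

lemma integrable_exp_inner (x : E) :
    Integrable (fun ω : sphere (0:E) 1 => Real.exp (inner ℝ x (ω : E))) volume.toSphere := by
  refine (integrable_const (Real.exp ‖x‖)).mono' ?_ (Filter.Eventually.of_forall fun ω => ?_)
  · exact (Real.continuous_exp.comp
      ((Continuous.inner continuous_const continuous_subtype_val))).aestronglyMeasurable
  · rw [Real.norm_eq_abs, abs_of_pos (Real.exp_pos _)]
    apply Real.exp_le_exp.2
    calc (inner ℝ x (ω:E) : ℝ) ≤ ‖x‖ * ‖(ω:E)‖ := real_inner_le_norm _ _
      _ = ‖x‖ := by rw [mem_sphere_zero_iff_norm.1 ω.2, mul_one]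

lemma integral_exp_inner_pos [Nontrivial E] (x : E) :
    0 < ∫ ω : sphere (0:E) 1, Real.exp (inner ℝ x (ω : E)) ∂(volume.toSphere) := by
  rw [integral_pos_iff_support_of_nonneg (fun ω => (Real.exp_pos _).le) (integrable_exp_inner x)]
  have hsupp : Function.support (fun ω : sphere (0:E) 1 => Real.exp (inner ℝ x (ω : E))) = univ :=
    eq_univ_of_forall fun ω => (Real.exp_pos _).ne'
  rw [hsupp]
  rw [show (volume.toSphere : Measure (sphere (0:E) 1)) univ
      = Module.finrank ℝ E * volume (ball (0:E) 1) from Measure.toSphere_apply_univ _]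
  exact ENNReal.mul_pos (by exact_mod_cast Module.finrank_pos.ne')
    (measure_ball_pos volume 0 one_pos).ne'

end general

variable (n : ℕ) [NeZero n]



abbrev Es := EuclideanSpace ℝ (Fin n)

/-- Spherical cap: points on the unit sphere with first coordinate at least `t`. -/
def cap (t : ℝ) : Set (sphere (0 : Es n) 1) := {ω | t ≤ (ω : Es n) 0}


variable {n}

lemma continuous_coord0 : Continuous (fun ω : sphere (0 : Es n) 1 => (ω : Es n) 0) :=
  (continuous_apply (0 : Fin n)).comp ((PiLp.continuous_ofLp 2 _).comp continuous_subtype_val)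

lemma cap_measurableSet (t : ℝ) : MeasurableSet (cap n t) :=
  measurableSet_le measurable_const continuous_coord0.measurable

lemma sum_sq_eq_one (ω : sphere (0 : Es n) 1) : ∑ i, ((ω : Es n) i)^2 = 1 := by
  have h : ‖(ω : Es n)‖ = 1 := mem_sphere_zero_iff_norm.1 ω.2
  have h2 := EuclideanSpace.norm_eq (ω : Es n)
  rw [h] at h2
  have h3 : ∑ i, ‖(ω : Es n) i‖ ^ 2 = 1 := Real.sqrt_eq_one.1 h2.symm
  calc ∑ i, ((ω : Es n) i)^2 = ∑ i, ‖(ω : Es n) i‖ ^ 2 :=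
        Finset.sum_congr rfl fun i _ => by rw [Real.norm_eq_abs, sq_abs]
    _ = 1 := h3

lemma coord_sq_add_le (ω : sphere (0 : Es n) 1) {i : Fin n} (hi : i ≠ 0) :
    ((ω : Es n) 0)^2 + ((ω : Es n) i)^2 ≤ 1 := by
  have h := Finset.sum_le_sum_of_subset_of_nonneg (Finset.subset_univ ({0, i} : Finset (Fin n)))
    (fun j _ _ => sq_nonneg ((ω : Es n) j))
  rw [Finset.sum_pair (Ne.symm hi)] at h
  calc ((ω : Es n) 0)^2 + ((ω : Es n) i)^2 ≤ ∑ j, ((ω : Es n) j)^2 := h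
    _ = 1 := sum_sq_eq_one ω

lemma coord_le_one (ω : sphere (0 : Es n) 1) (i : Fin n) : |(ω : Es n) i| ≤ 1 := by
  have h : ((ω : Es n) i)^2 ≤ 1 := by
    calc ((ω : Es n) i)^2 ≤ ∑ j, ((ω : Es n) j)^2 :=
          Finset.single_le_sum (fun j _ => sq_nonneg ((ω : Es n) j)) (Finset.mem_univ i)
      _ = 1 := sum_sq_eq_one ω
  nlinarith [abs_nonneg ((ω : Es n) i), sq_abs ((ω : Es n) i)]

/-- Volume of a coordinate box in Euclidean space. -/
lemma volume_coord_set (B : Fin n → Set ℝ) (hB : ∀ i, MeasurableSet (B i)) :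
    volume {y : Es n | ∀ i, y i ∈ B i} = ∏ i, volume (B i) := by
  have e := (MeasurableEquiv.toLp 2 (Fin n → ℝ)).symm
  have hmp := EuclideanSpace.volume_preserving_symm_measurableEquiv_toLp (Fin n)
  have h1 : {y : Es n | ∀ i, y i ∈ B i}
      = (MeasurableEquiv.toLp 2 (Fin n → ℝ)).symm ⁻¹' (Set.univ.pi B) := by
    ext y; simp [Set.mem_pi]
  rw [h1, ← Measure.map_apply (MeasurableEquiv.toLp 2 (Fin n → ℝ)).symm.measurable
    (MeasurableSet.univ_pi hB), hmp.map_eq, volume_pi_pi]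

lemma prod_ite_vol (a b : ℝ≥0∞) :
    (∏ i : Fin n, (if i = 0 then a else b)) = a * b ^ (n - 1) := by
  rw [← Finset.mul_prod_erase Finset.univ _ (Finset.mem_univ (0 : Fin n)), if_pos rfl]
  congr 1
  rw [Finset.prod_congr rfl (fun i hi => if_neg (Finset.ne_of_mem_erase hi)), Finset.prod_const,
    Finset.card_erase_of_mem (Finset.mem_univ _), Finset.card_univ, Fintype.card_fin]

lemma norm_sq_eq (y : Es n) : ‖y‖^2 = ∑ i, (y i)^2 := by
  rw [EuclideanSpace.norm_eq, Real.sq_sqrt (by positivity)]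
  exact Finset.sum_congr rfl fun i _ => by rw [Real.norm_eq_abs, sq_abs]

lemma sector_subset_box {t : ℝ} (ht0 : 0 < t) :
    (Ioo (0:ℝ) 1 • (Subtype.val '' cap n t)) ⊆
    {y : Es n | ∀ i, y i ∈ (if i = 0 then Ioc (0:ℝ) 1
      else Icc (-(Real.sqrt (1 - t^2))) (Real.sqrt (1 - t^2)))} := by
  rintro z hz
  rw [Set.mem_smul] at hz
  obtain ⟨r, hr, y, ⟨ω, hω, rfl⟩, rfl⟩ := hz
  obtain ⟨hr0, hr1⟩ := hr
  have hω0 : t ≤ (ω : Es n) 0 := hω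
  have h1 : |(ω : Es n) 0| ≤ 1 := coord_le_one ω 0
  intro i
  have hsm : (r • (ω : Es n)) i = r * (ω : Es n) i := rfl
  by_cases hi : i = 0
  · subst hi
    rw [if_pos rfl, hsm]
    constructor
    · exact mul_pos hr0 (lt_of_lt_of_le ht0 hω0)
    · have : (ω : Es n) 0 ≤ 1 := (abs_le.1 h1).2
      nlinarith
  · rw [if_neg hi, hsm]
    have h2 : ((ω : Es n) 0)^2 + ((ω : Es n) i)^2 ≤ 1 := coord_sq_add_le ω hi
    have h3 : t^2 ≤ ((ω : Es n) 0)^2 := by nlinarith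
    have h4 : ((ω : Es n) i)^2 ≤ 1 - t^2 := by linarith
    have h5 : |(ω : Es n) i| ≤ Real.sqrt (1 - t^2) := by
      rw [← Real.sqrt_sq_eq_abs]
      exact Real.sqrt_le_sqrt h4
    have h6 : |r * (ω : Es n) i| ≤ Real.sqrt (1 - t^2) := by
      rw [abs_mul, abs_of_pos hr0]
      calc r * |(ω : Es n) i| ≤ 1 * |(ω : Es n) i| :=
            mul_le_mul_of_nonneg_right hr1.le (abs_nonneg _)
        _ ≤ Real.sqrt (1 - t^2) := by rw [one_mul]; exact h5
    exact abs_le.1 h6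

/-- Half-width of the box inscribed in the sector over the cap. -/
def beta (n : ℕ) (t : ℝ) : ℝ := Real.sqrt (1 - t) / (4 * Real.sqrt n)

lemma beta_nonneg (t : ℝ) : 0 ≤ beta n t := by
  apply div_nonneg (Real.sqrt_nonneg _)
  positivity

lemma box_subset_sector {t : ℝ} (ht0 : 0 ≤ t) (ht1 : t ≤ 1) :
    {y : Es n | ∀ i, y i ∈ (if i = 0 then Ioc (1/2:ℝ) (3/4)
      else Ioc (-(beta n t)) (beta n t))} ⊆
    Ioo (0:ℝ) 1 • (Subtype.val '' cap n t) := by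
  intro y hy
  have hn0 : (0:ℝ) < n := by
    have := NeZero.pos n
    exact_mod_cast this
  have hy0 : y 0 ∈ Ioc (1/2:ℝ) (3/4) := by have := hy 0; rwa [if_pos rfl] at this
  have hyi : ∀ i : Fin n, i ≠ 0 → |y i| ≤ beta n t := by
    intro i hi
    have := hy i
    rw [if_neg hi] at this
    exact abs_le.2 ⟨le_of_lt this.1, this.2⟩
  have hb2 : (beta n t)^2 = (1 - t) / (16 * n) := by
    rw [beta, div_pow, Real.sq_sqrt (by linarith), mul_pow,
      Real.sq_sqrt (le_of_lt hn0)]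
    norm_num
  have hS : ∑ i ∈ Finset.univ.erase (0 : Fin n), (y i)^2 ≤ (1 - t) / 16 := by
    calc ∑ i ∈ Finset.univ.erase (0 : Fin n), (y i)^2
        ≤ ∑ _i ∈ Finset.univ.erase (0 : Fin n), (beta n t)^2 := by
          refine Finset.sum_le_sum fun i hi => ?_
          have h := hyi i (Finset.ne_of_mem_erase hi)
          nlinarith [abs_nonneg (y i), sq_abs (y i)]
      _ = (Finset.univ.erase (0 : Fin n)).card * (beta n t)^2 := by
          rw [Finset.sum_const, nsmul_eq_mul]
      _ ≤ n * (beta n t)^2 := by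
          apply mul_le_mul_of_nonneg_right _ (sq_nonneg _)
          have : (Finset.univ.erase (0 : Fin n)).card ≤ n := by
            rw [Finset.card_erase_of_mem (Finset.mem_univ _), Finset.card_univ,
              Fintype.card_fin]
            omega
          exact_mod_cast this
      _ = (1 - t) / 16 := by
          rw [hb2]
          field_simp
  have hsplit : ‖y‖^2 = (y 0)^2 + ∑ i ∈ Finset.univ.erase (0 : Fin n), (y i)^2 := by
    rw [norm_sq_eq, ← Finset.add_sum_erase Finset.univ _ (Finset.mem_univ (0 : Fin n))]
  have hSnn : 0 ≤ ∑ i ∈ Finset.univ.erase (0 : Fin n), (y i)^2 :=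
    Finset.sum_nonneg fun i _ => sq_nonneg (y i)
  have hnorm_lt : ‖y‖ < 1 := by nlinarith [norm_nonneg y, hy0.1, hy0.2, hS]
  have hnorm_pos : 0 < ‖y‖ := by nlinarith [norm_nonneg y, hy0.1, hSnn]
  have hkey : t * ‖y‖ ≤ y 0 := by
    have hsq : (t * ‖y‖)^2 ≤ (y 0)^2 := by
      set S := ∑ i ∈ Finset.univ.erase (0 : Fin n), (y i)^2 with hSdef
      have ht2 : t^2 ≤ 1 := by nlinarith
      have htt : t^2 ≤ t := by nlinarith
      have hy2 : (1/4:ℝ) ≤ (y 0)^2 := by nlinarith [hy0.1]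
      have hA : t^2 * S ≤ S := by nlinarith [mul_nonneg (sub_nonneg.2 ht2) hSnn]
      have hB : (1 - t)/16 ≤ (1 - t) * (y 0)^2 := by
        nlinarith [mul_le_mul_of_nonneg_left hy2 (sub_nonneg.2 ht1)]
      have hC : (t^2 - t) * (y 0)^2 ≤ 0 :=
        mul_nonpos_of_nonpos_of_nonneg (by linarith) (sq_nonneg _)
      have e1 : (t*‖y‖)^2 = t^2*(y 0)^2 + t^2*S := by rw [mul_pow, hsplit]; ring
      nlinarith [hA, hB, hC, hS]
    nlinarith [mul_nonneg ht0 (norm_nonneg y), hy0.1]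
  have hne : y ≠ 0 := fun h => by simp [h] at hnorm_pos
  have hnne : ‖y‖ ≠ 0 := ne_of_gt hnorm_pos
  refine Set.mem_smul.2 ⟨‖y‖, ⟨hnorm_pos, hnorm_lt⟩, ‖y‖⁻¹ • y, ?_, smul_inv_smul₀ hnne y⟩
  have hsph : ‖y‖⁻¹ • y ∈ sphere (0 : Es n) 1 := by
    rw [mem_sphere_zero_iff_norm]
    exact norm_smul_inv_norm hne
  refine ⟨⟨‖y‖⁻¹ • y, hsph⟩, ?_, rfl⟩
  show t ≤ (‖y‖⁻¹ • y) 0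
  have : (‖y‖⁻¹ • y) 0 = y 0 / ‖y‖ := by
    show ‖y‖⁻¹ * y 0 = y 0 / ‖y‖
    ring
  rw [this, le_div_iff₀ hnorm_pos]
  exact hkey

lemma cap_meas_le {t : ℝ} (ht0 : 0 < t) :
    volume.toSphere (cap n t) ≤
      (n : ℝ≥0∞) * ENNReal.ofReal ((2 * Real.sqrt (1 - t^2)) ^ (n - 1)) := by
  rw [Measure.toSphere_apply' _ (cap_measurableSet t), finrank_euclideanSpace_fin]
  apply mul_le_mul_right
  set δ := Real.sqrt (1 - t^2) with hδ
  calc volume (Ioo (0:ℝ) 1 • (Subtype.val '' cap n t))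
      ≤ volume {y : Es n | ∀ i, y i ∈ (if i = 0 then Ioc (0:ℝ) 1 else Icc (-δ) δ)} :=
        measure_mono (sector_subset_box ht0)
    _ = ∏ i : Fin n, volume (if i = 0 then Ioc (0:ℝ) 1 else Icc (-δ) δ) :=
        volume_coord_set _ (fun i => by
          by_cases hi : i = 0 <;> simp [hi, measurableSet_Ioc, measurableSet_Icc])
    _ = volume (Ioc (0:ℝ) 1) * volume (Icc (-δ) δ) ^ (n - 1) := by
        rw [← prod_ite_vol]
        exact Finset.prod_congr rfl fun i _ => by by_cases hi : i = 0 <;> simp [hi]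
    _ ≤ ENNReal.ofReal ((2 * δ) ^ (n - 1)) := by
        rw [Real.volume_Ioc, Real.volume_Icc]
        have h1 : ENNReal.ofReal (1 - 0 : ℝ) = 1 := by norm_num
        rw [h1, one_mul]
        have h2 : (δ - -δ : ℝ) = 2 * δ := by ring
        rw [h2, ← ENNReal.ofReal_pow (by positivity)]

lemma cap_meas_ge {t : ℝ} (ht0 : 0 ≤ t) (ht1 : t ≤ 1) :
    (n : ℝ≥0∞) * ENNReal.ofReal ((1/4) * (2 * beta n t) ^ (n - 1)) ≤
      volume.toSphere (cap n t) := by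
  rw [Measure.toSphere_apply' _ (cap_measurableSet t), finrank_euclideanSpace_fin]
  apply mul_le_mul_right
  set β := beta n t with hβ
  calc ENNReal.ofReal ((1/4) * (2 * β) ^ (n - 1))
      = volume (Ioc (1/2:ℝ) (3/4)) * volume (Ioc (-β) β) ^ (n - 1) := by
        rw [Real.volume_Ioc, Real.volume_Ioc]
        have h2 : (β - -β : ℝ) = 2 * β := by ring
        rw [h2, ← ENNReal.ofReal_pow (mul_nonneg (by norm_num) (beta_nonneg t))]
        rw [← ENNReal.ofReal_mul (by norm_num)]
        norm_num
        rfl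
    _ = ∏ i : Fin n, volume (if i = 0 then Ioc (1/2:ℝ) (3/4) else Ioc (-β) β) := by
        rw [← prod_ite_vol]
        exact (Finset.prod_congr rfl fun i _ => by by_cases hi : i = 0 <;> simp [hi]).symm
    _ = volume {y : Es n | ∀ i, y i ∈ (if i = 0 then Ioc (1/2:ℝ) (3/4) else Ioc (-β) β)} :=
        (volume_coord_set _ (fun i => by
          by_cases hi : i = 0 <;> simp [hi, measurableSet_Ioc])).symm
    _ ≤ volume (Ioo (0:ℝ) 1 • (Subtype.val '' cap n t)) :=
        measure_mono (box_subset_sector ht0 ht1)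



/-- The exponent `p = (n-1)/2`. -/
def pexp (n : ℕ) : ℝ := ((n : ℝ) - 1) / 2

/-- The spherical integral as a function of the radius. -/
def I (n : ℕ) [NeZero n] (r : ℝ) : ℝ :=
  ∫ ω : sphere (0 : Es n) 1, Real.exp (r * (ω : Es n) 0) ∂(volume.toSphere)

lemma I_integrable (r : ℝ) :
    Integrable (fun ω : sphere (0 : Es n) 1 => Real.exp (r * (ω : Es n) 0))
      (volume.toSphere) := by
  refine (integrable_const (Real.exp |r|)).mono' ?_ (Eventually.of_forall fun ω => ?_)
  · exact (Real.continuous_exp.comp (continuous_const.mul continuous_coord0)).aestronglyMeasurable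
  · rw [Real.norm_eq_abs, abs_of_pos (Real.exp_pos _)]
    apply Real.exp_le_exp.2
    calc r * (ω : Es n) 0 ≤ |r * (ω : Es n) 0| := le_abs_self _
      _ = |r| * |(ω : Es n) 0| := abs_mul _ _
      _ ≤ |r| * 1 := mul_le_mul_of_nonneg_left (coord_le_one ω 0) (abs_nonneg r)
      _ = |r| := mul_one _

/-- Lower bound by restricting to a cap. -/
lemma I_ge_cap {r t : ℝ} (hr : 0 ≤ r) (ht0 : 0 ≤ t) (ht1 : t ≤ 1) :
    Real.exp (r * t) * (volume.toSphere (cap n t)).toReal ≤ I n r := by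
  unfold I
  have hint := I_integrable (n := n) r
  have h1 : Real.exp (r * t) * (volume.toSphere (cap n t)).toReal ≤
      ∫ ω in cap n t, Real.exp (r * (ω : Es n) 0) ∂(volume.toSphere) := by
    refine setIntegral_ge_of_const_le_real (cap_measurableSet t) (measure_ne_top _ _)
      (fun ω hω => Real.exp_le_exp.2 (mul_le_mul_of_nonneg_left hω hr)) hint.integrableOn
  refine h1.trans (setIntegral_le_integral hint
    (Eventually.of_forall fun ω => (Real.exp_pos _).le))

/-- The band measure bound constant. -/
def Kc (n : ℕ) : ℝ :=
  (n : ℝ) * (2 * Real.sqrt 2) ^ (n - 1) +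
    ((volume.toSphere : Measure (sphere (0 : Es n) 1)) univ).toReal * 4 ^ (pexp n)

lemma Kc_nonneg {n : ℕ} [NeZero n] : 0 ≤ Kc n := by
  unfold Kc
  have h1 : (0:ℝ) ≤ ((volume.toSphere : Measure (sphere (0 : Es n) 1)) univ).toReal :=
    ENNReal.toReal_nonneg
  positivity

lemma pexp_nonneg {n : ℕ} (hn : 1 ≤ n) : 0 ≤ pexp n := by
  have : (1:ℝ) ≤ n := by exact_mod_cast hn
  unfold pexp; linarith

lemma sqrt_pow_eq_rpow {s : ℝ} (hs : 0 ≤ s) (hn : 1 ≤ n) :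
    (Real.sqrt s) ^ (n - 1) = s ^ (pexp n) := by
  rw [Real.sqrt_eq_rpow, ← Real.rpow_natCast (s ^ ((1:ℝ)/2)) (n-1), ← Real.rpow_mul hs]
  congr 1
  have : ((n - 1 : ℕ) : ℝ) = (n : ℝ) - 1 := by
    have : (1:ℕ) ≤ n := hn
    push_cast [Nat.cast_sub this]
    ring
  rw [this, pexp]
  ring

/-- Uniform band bound: `σ {ω : 1 - ω₀ ≤ s} ≤ K s^p` for `s > 0`. -/
lemma band_meas_le (hn : 1 ≤ n) {s : ℝ} (hs : 0 < s) :
    volume.toSphere {ω : sphere (0 : Es n) 1 | 1 - (ω : Es n) 0 ≤ s} ≤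
      ENNReal.ofReal (Kc n * s ^ (pexp n)) := by
  have hband : {ω : sphere (0 : Es n) 1 | 1 - (ω : Es n) 0 ≤ s} = cap n (1 - s) := by
    ext ω; simp only [cap, mem_setOf_eq]; constructor <;> intro h <;> linarith
  have hsp : 0 < s ^ (pexp n) := Real.rpow_pos_of_pos hs _
  have hterm2 : 0 ≤ ((volume.toSphere : Measure (sphere (0 : Es n) 1)) univ).toReal *
      4 ^ (pexp n) := by positivity
  have hterm1 : 0 ≤ (n : ℝ) * (2 * Real.sqrt 2) ^ (n - 1) := by positivity
  rw [hband]
  by_cases hcase : s < 1/4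
  · -- small s: use the cap bound
    have ht0 : 0 < 1 - s := by linarith
    refine (cap_meas_le ht0).trans ?_
    have key : (n : ℝ) * (2 * Real.sqrt (1 - (1-s)^2)) ^ (n - 1) ≤
        (n : ℝ) * (2 * Real.sqrt 2) ^ (n - 1) * s ^ (pexp n) := by
      have h1 : (1 - (1-s)^2) = s * (2 - s) := by ring
      have h2 : Real.sqrt (1 - (1-s)^2) ≤ Real.sqrt 2 * Real.sqrt s := by
        rw [h1, ← Real.sqrt_mul (by norm_num : (0:ℝ) ≤ 2)]
        apply Real.sqrt_le_sqrt
        nlinarith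
      have h3 : (2 * Real.sqrt (1 - (1-s)^2)) ^ (n - 1) ≤
          (2 * Real.sqrt 2) ^ (n - 1) * s ^ (pexp n) := by
        have h4 : (2 * Real.sqrt (1 - (1-s)^2)) ^ (n - 1) ≤
            (2 * Real.sqrt 2 * Real.sqrt s) ^ (n - 1) := by
          apply pow_le_pow_left₀ (by positivity)
          nlinarith [Real.sqrt_nonneg (1 - (1-s)^2)]
        refine h4.trans_eq ?_
        rw [mul_pow, sqrt_pow_eq_rpow hs.le hn]
      have hn' : (0:ℝ) ≤ n := Nat.cast_nonneg n
      nlinarith [h3]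
    calc (n : ℝ≥0∞) * ENNReal.ofReal ((2 * Real.sqrt (1 - (1-s)^2)) ^ (n - 1))
        = ENNReal.ofReal ((n : ℝ) * (2 * Real.sqrt (1 - (1-s)^2)) ^ (n - 1)) := by
          rw [ENNReal.ofReal_mul (by positivity), ENNReal.ofReal_natCast]
      _ ≤ ENNReal.ofReal (Kc n * s ^ (pexp n)) := by
          apply ENNReal.ofReal_le_ofReal
          rw [Kc, add_mul]
          nlinarith [mul_nonneg hterm2 hsp.le]
  · -- large s: use total measure
    push_neg at hcase
    have h1 : (volume.toSphere : Measure (sphere (0 : Es n) 1)) (cap n (1-s)) ≤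
        volume.toSphere univ := measure_mono (subset_univ _)
    refine h1.trans ?_
    rw [← ENNReal.ofReal_toReal (measure_ne_top volume.toSphere univ)]
    apply ENNReal.ofReal_le_ofReal
    have h4 : (1:ℝ) ≤ 4 ^ (pexp n) * s ^ (pexp n) := by
      rw [← Real.mul_rpow (by norm_num) hs.le]
      refine Real.one_le_rpow ?_ (pexp_nonneg hn)
      linarith
    rw [Kc, add_mul]
    nlinarith [mul_nonneg hterm1 hsp.le,
      ENNReal.toReal_nonneg (a := (volume.toSphere : Measure (sphere (0 : Es n) 1)) univ)]


/-- Exponential tail integral. -/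
lemma exp_tail {r : ℝ} (hr : 0 < r) (a : ℝ) :
    ∫ s in Ioi a, r * Real.exp (-(r * s)) = Real.exp (-(r * a)) := by
  have hderiv : ∀ x ∈ Ioi a, HasDerivAt (fun s => -Real.exp (-(r * s)))
      (r * Real.exp (-(r * x))) x := by
    intro x _
    have h1 : HasDerivAt (fun s : ℝ => -(r * s)) (-r) x := by
      simpa using ((hasDerivAt_id x).const_mul (-r))
    have h2 := (Real.hasDerivAt_exp (-(r * x))).comp x h1
    have h3 := h2.neg
    refine h3.congr_deriv ?_
    ring
  have hcont : ContinuousWithinAt (fun s => -Real.exp (-(r * s))) (Ici a) a := by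
    apply Continuous.continuousWithinAt
    continuity
  have hint : IntegrableOn (fun x => r * Real.exp (-(r * x))) (Ioi a) := by
    have := (exp_neg_integrableOn_Ioi a hr).const_mul r
    simpa [neg_mul, IntegrableOn] using this
  have htend : Tendsto (fun s => -Real.exp (-(r * s))) atTop (nhds 0) := by
    have h2 : Tendsto (fun s : ℝ => r * s) atTop atTop :=
      Tendsto.const_mul_atTop hr tendsto_id
    have h3 := (Real.tendsto_exp_neg_atTop_nhds_zero.comp h2).neg
    simpa [Function.comp] using h3
  have := integral_Ioi_of_hasDerivAt_of_tendsto hcont hderiv hint htend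
  rw [this]
  ring

/-- Pointwise layer-cake representation. -/
lemma pointwise_layer {r : ℝ} (hr : 0 < r) {a : ℝ} (ha : 0 ≤ a) :
    ∫⁻ s in Ioi (0:ℝ), (Ici a).indicator (fun s => ENNReal.ofReal (r * Real.exp (-(r * s)))) s
      = ENNReal.ofReal (Real.exp (-(r * a))) := by
  rw [lintegral_indicator measurableSet_Ici, Measure.restrict_restrict measurableSet_Ici]
  have hae : (Ici a ∩ Ioi 0 : Set ℝ) =ᵐ[volume] (Ioi a : Set ℝ) := by
    apply (ae_eq_set).2
    constructor
    · refine measure_mono_null ?_ (measure_singleton a)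
      intro x hx
      simp only [mem_diff, mem_inter_iff, mem_Ici, mem_Ioi, not_lt] at hx
      have : x = a := le_antisymm hx.2 hx.1.1
      simp [this]
    · refine measure_mono_null ?_ (measure_empty (μ := volume))
      intro x hx
      simp only [mem_diff, mem_inter_iff, mem_Ici, mem_Ioi, not_and, not_le] at hx
      obtain ⟨h1, h2⟩ := hx
      have h3 := h2 (le_of_lt h1)
      have h4 : 0 < x := lt_of_le_of_lt ha h1
      exact h3 h4
  rw [Measure.restrict_congr_set hae]
  rw [← ofReal_integral_eq_lintegral_ofReal]
  · rw [exp_tail hr a]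
  · have := (exp_neg_integrableOn_Ioi a hr).const_mul r
    simpa [neg_mul] using this
  · exact Eventually.of_forall fun s => by positivity

lemma one_sub_coord_nonneg {n : ℕ} [NeZero n] (ω : sphere (0 : Es n) 1) :
    0 ≤ 1 - (ω : Es n) 0 := by
  have := coord_le_one ω 0
  have := (abs_le.1 this).2
  linarith

/-- Upper bound for the spherical integral. -/
lemma I_le (hn : 1 ≤ n) {r : ℝ} (hr : 1 ≤ r) :
    I n r ≤ (Kc n * Real.Gamma (pexp n + 1)) * r ^ (-(pexp n)) * Real.exp r := by
  have hr0 : 0 < r := lt_of_lt_of_le one_pos hr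
  set p := pexp n with hp
  set σ := (volume.toSphere : Measure (sphere (0 : Es n) 1)) with hσ
  have hmeas_coord : Measurable (fun ω : sphere (0 : Es n) 1 => (ω : Es n) 0) :=
    continuous_coord0.measurable
  -- step 0 : Bochner integral to lintegral
  have step0 : I n r = (∫⁻ ω, ENNReal.ofReal (Real.exp (r * (ω : Es n) 0)) ∂σ).toReal := by
    unfold I
    rw [integral_eq_lintegral_of_nonneg_ae (Eventually.of_forall fun ω => (Real.exp_pos _).le)
      (I_integrable r).aestronglyMeasurable]
  -- pointwise split
  have split : ∀ ω : sphere (0 : Es n) 1,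
      ENNReal.ofReal (Real.exp (r * (ω : Es n) 0)) =
        ENNReal.ofReal (Real.exp r) *
          ENNReal.ofReal (Real.exp (-(r * (1 - (ω : Es n) 0)))) := by
    intro ω
    rw [← ENNReal.ofReal_mul (Real.exp_pos r).le, ← Real.exp_add]
    congr 2
    ring
  -- the two-variable function
  set F : sphere (0 : Es n) 1 × ℝ → ℝ≥0∞ :=
    fun q => ENNReal.ofReal (r * Real.exp (-(r * q.2))) *
      ({q : sphere (0 : Es n) 1 × ℝ | 1 - (q.1 : Es n) 0 ≤ q.2}).indicator 1 q with hF
  have hA : MeasurableSet {q : sphere (0 : Es n) 1 × ℝ | 1 - (q.1 : Es n) 0 ≤ q.2} := by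
    apply measurableSet_le
    · exact (measurable_const.sub (hmeas_coord.comp measurable_fst))
    · exact measurable_snd
  have hFmeas : Measurable F := by
    apply Measurable.mul
    · apply ENNReal.measurable_ofReal.comp
      exact (measurable_const.mul ((Real.measurable_exp).comp
        ((measurable_const.mul measurable_snd).neg)))
    · exact measurable_const.indicator hA
  -- inner identity
  have inner_id : ∀ ω : sphere (0 : Es n) 1,
      ∫⁻ s in Ioi (0:ℝ), F (ω, s) = ENNReal.ofReal (Real.exp (-(r * (1 - (ω : Es n) 0)))) := by
    intro ω
    have heq : ∀ s : ℝ, F (ω, s) =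
        (Ici (1 - (ω : Es n) 0)).indicator
          (fun s => ENNReal.ofReal (r * Real.exp (-(r * s)))) s := by
      intro s
      simp only [hF, Set.indicator_apply, mem_setOf_eq, mem_Ici]
      by_cases h : 1 - (ω : Es n) 0 ≤ s
      · simp [h]
      · simp [h]
    rw [lintegral_congr heq]
    exact pointwise_layer hr0 (one_sub_coord_nonneg ω)
  -- swap
  have swap : ∫⁻ ω, ∫⁻ s in Ioi (0:ℝ), F (ω, s) ∂volume ∂σ
      = ∫⁻ s in Ioi (0:ℝ), ∫⁻ ω, F (ω, s) ∂σ ∂volume := by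
    apply lintegral_lintegral_swap
    exact hFmeas.aemeasurable
  -- inner after swap
  have inner2 : ∀ s : ℝ, ∫⁻ ω, F (ω, s) ∂σ =
      ENNReal.ofReal (r * Real.exp (-(r * s))) * σ {ω : sphere (0 : Es n) 1 | 1 - (ω : Es n) 0 ≤ s} := by
    intro s
    have heq : ∀ ω : sphere (0 : Es n) 1, F (ω, s) =
        ENNReal.ofReal (r * Real.exp (-(r * s))) *
          ({ω : sphere (0 : Es n) 1 | 1 - (ω : Es n) 0 ≤ s}).indicator 1 ω := by
      intro ω
      simp only [hF, Set.indicator_apply, mem_setOf_eq, Pi.one_apply]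
    rw [lintegral_congr heq,
      lintegral_const_mul' _ _ ENNReal.ofReal_ne_top,
      lintegral_indicator_one (measurableSet_le (measurable_const.sub hmeas_coord)
        measurable_const : MeasurableSet {ω : sphere (0 : Es n) 1 | 1 - (ω : Es n) 0 ≤ s})]
  -- the key bound on the s-integral
  have keybound : ∫⁻ s in Ioi (0:ℝ), ∫⁻ ω, F (ω, s) ∂σ ∂volume ≤
      ENNReal.ofReal ((Kc n * Real.Gamma (p + 1)) * r ^ (-p)) := by
    have hb : ∀ᵐ s ∂(volume.restrict (Ioi (0:ℝ))),
        (∫⁻ ω, F (ω, s) ∂σ) ≤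
        ENNReal.ofReal ((r * Kc n) * (s ^ p * Real.exp (-(r * s)))) := by
      filter_upwards [ae_restrict_mem measurableSet_Ioi] with s hs
      rw [inner2 s]
      calc ENNReal.ofReal (r * Real.exp (-(r * s))) * σ {ω | 1 - (ω : Es n) 0 ≤ s}
          ≤ ENNReal.ofReal (r * Real.exp (-(r * s))) * ENNReal.ofReal (Kc n * s ^ p) :=
            mul_le_mul_right (band_meas_le hn hs) _
        _ = ENNReal.ofReal ((r * Kc n) * (s ^ p * Real.exp (-(r * s)))) := by
            rw [← ENNReal.ofReal_mul (by positivity)]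
            congr 1
            ring
    refine (lintegral_mono_ae hb).trans ?_
    have hint : IntegrableOn (fun s : ℝ => s ^ p * Real.exp (-(r * s))) (Ioi 0) := by
      have h := integrableOn_rpow_mul_exp_neg_mul_rpow
        (by { rw [hp]; unfold pexp; push_cast; nlinarith [(by exact_mod_cast hn : (1:ℝ) ≤ n)] } :
          (-1:ℝ) < p) one_pos hr0
      apply h.congr_fun ?_ measurableSet_Ioi
      intro x hx
      simp only [Real.rpow_one]
      ring_nf
    have hint2 : Integrable (fun s : ℝ => (r * Kc n) * (s ^ p * Real.exp (-(r * s))))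
        (volume.restrict (Ioi 0)) := hint.const_mul _
    rw [← ofReal_integral_eq_lintegral_ofReal hint2 ?_]
    · apply ENNReal.ofReal_le_ofReal
      rw [integral_const_mul]
      have hval : ∫ s in Ioi (0:ℝ), s ^ p * Real.exp (-(r * s)) = (1/r) ^ (p+1) * Real.Gamma (p+1) := by
        have := Real.integral_rpow_mul_exp_neg_mul_Ioi
          (by { rw [hp]; unfold pexp; push_cast; nlinarith [(by exact_mod_cast hn : (1:ℝ) ≤ n)] } :
            (0:ℝ) < p + 1) hr0
        rw [← this]
        apply setIntegral_congr_fun measurableSet_Ioi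
        intro x hx
        rw [add_sub_cancel_right]
      rw [hval]
      have hsimp : r * ((1/r) ^ (p+1) * Real.Gamma (p+1)) = Real.Gamma (p+1) * r ^ (-p) := by
        have h1 : (1/r : ℝ) ^ (p+1) = (r ^ (p+1))⁻¹ := by
          rw [one_div, Real.inv_rpow hr0.le]
        rw [h1, Real.rpow_add hr0, Real.rpow_one, Real.rpow_neg hr0.le]
        have hrp : r ^ p ≠ 0 := (Real.rpow_pos_of_pos hr0 p).ne'
        field_simp
      calc r * Kc n * ((1/r) ^ (p+1) * Real.Gamma (p+1))
          = Kc n * (r * ((1/r) ^ (p+1) * Real.Gamma (p+1))) := by ring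
        _ = Kc n * (Real.Gamma (p+1) * r ^ (-p)) := by rw [hsimp]
        _ = Kc n * Real.Gamma (p+1) * r ^ (-p) := by ring
        _ ≤ Kc n * Real.Gamma (p+1) * r ^ (-p) := le_rfl
    · filter_upwards [ae_restrict_mem measurableSet_Ioi] with s hs
      have := Kc_nonneg (n := n)
      have h2 : (0:ℝ) ≤ s ^ p := (Real.rpow_pos_of_pos hs _).le
      positivity
  -- assemble
  have hnn : 0 ≤ (Kc n * Real.Gamma (p + 1)) * r ^ (-p) := by
    have h1 := Kc_nonneg (n := n)
    have h2 : 0 < Real.Gamma (p + 1) :=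
      Real.Gamma_pos_of_pos (by nlinarith [pexp_nonneg hn])
    positivity
  have chain : (∫⁻ ω, ENNReal.ofReal (Real.exp (r * (ω : Es n) 0)) ∂σ) ≤
      ENNReal.ofReal (Real.exp r * ((Kc n * Real.Gamma (p+1)) * r ^ (-p))) := by
    calc ∫⁻ ω, ENNReal.ofReal (Real.exp (r * (ω : Es n) 0)) ∂σ
        = ∫⁻ ω, ENNReal.ofReal (Real.exp r) *
            ENNReal.ofReal (Real.exp (-(r * (1 - (ω : Es n) 0)))) ∂σ := lintegral_congr split
      _ = ENNReal.ofReal (Real.exp r) *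
            ∫⁻ ω, ENNReal.ofReal (Real.exp (-(r * (1 - (ω : Es n) 0)))) ∂σ :=
          lintegral_const_mul' _ _ ENNReal.ofReal_ne_top
      _ = ENNReal.ofReal (Real.exp r) * ∫⁻ ω, (∫⁻ s in Ioi (0:ℝ), F (ω, s)) ∂σ := by
          rw [lintegral_congr fun ω => (inner_id ω).symm]
      _ = ENNReal.ofReal (Real.exp r) * ∫⁻ s in Ioi (0:ℝ), (∫⁻ ω, F (ω, s) ∂σ) := by rw [swap]
      _ ≤ ENNReal.ofReal (Real.exp r) *
            ENNReal.ofReal ((Kc n * Real.Gamma (p + 1)) * r ^ (-p)) :=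
          mul_le_mul_right keybound _
      _ = ENNReal.ofReal (Real.exp r * ((Kc n * Real.Gamma (p+1)) * r ^ (-p))) :=
          (ENNReal.ofReal_mul (Real.exp_pos r).le).symm
  rw [step0]
  calc (∫⁻ ω, ENNReal.ofReal (Real.exp (r * (ω : Es n) 0)) ∂σ).toReal
      ≤ (ENNReal.ofReal (Real.exp r * ((Kc n * Real.Gamma (p+1)) * r ^ (-p)))).toReal :=
        ENNReal.toReal_mono ENNReal.ofReal_ne_top chain
    _ = Real.exp r * ((Kc n * Real.Gamma (p+1)) * r ^ (-p)) :=
        ENNReal.toReal_ofReal (by nlinarith [Real.exp_pos r])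
    _ = (Kc n * Real.Gamma (pexp n + 1)) * r ^ (-(pexp n)) * Real.exp r := by rw [hp]; ring


/-- Lower bound constant. -/
def cLB (n : ℕ) : ℝ := (n : ℝ)/4 * (1/(2 * Real.sqrt n))^(n-1) * Real.exp (-1)

lemma cLB_pos {n : ℕ} [NeZero n] : 0 < cLB n := by
  have h0 : 0 < (n:ℝ) := by exact_mod_cast NeZero.pos n
  have h1 : 0 < Real.sqrt n := Real.sqrt_pos.2 h0
  unfold cLB
  positivity

lemma I_ge (hn : 1 ≤ n) {r : ℝ} (hr : 1 ≤ r) :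
    cLB n * r ^ (-(pexp n)) * Real.exp r ≤ I n r := by
  have hr0 : 0 < r := lt_of_lt_of_le one_pos hr
  set t : ℝ := 1 - 1/r with hT
  have hinv : 0 < 1/r := by positivity
  have hinv1 : 1/r ≤ 1 := by rw [div_le_one hr0]; exact hr
  have ht0 : 0 ≤ t := by rw [hT]; linarith
  have ht1 : t ≤ 1 := by rw [hT]; linarith
  have h1 := I_ge_cap (n := n) hr0.le ht0 ht1
  have h2 := cap_meas_ge (n := n) ht0 ht1
  have hfin : volume.toSphere (cap n t) ≠ ⊤ := measure_ne_top _ _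
  have h3 : ((n : ℝ≥0∞) * ENNReal.ofReal ((1/4) * (2 * beta n t) ^ (n - 1))).toReal ≤
      (volume.toSphere (cap n t)).toReal := ENNReal.toReal_mono hfin h2
  have h4 : ((n : ℝ≥0∞) * ENNReal.ofReal ((1/4) * (2 * beta n t) ^ (n - 1))).toReal =
      (n : ℝ) * ((1/4) * (2 * beta n t) ^ (n - 1)) := by
    rw [ENNReal.toReal_mul, ENNReal.toReal_natCast,
      ENNReal.toReal_ofReal (mul_nonneg (by norm_num) (pow_nonneg
        (mul_nonneg (by norm_num) (beta_nonneg t)) _))]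
  rw [h4] at h3
  have hexp : Real.exp (r * t) = Real.exp r * Real.exp (-1) := by
    rw [← Real.exp_add]
    congr 1
    rw [hT, mul_sub, mul_one, mul_one_div, div_self hr0.ne']
    ring
  have hbeta : 2 * beta n t = Real.sqrt (1/r) / (2 * Real.sqrt n) := by
    rw [beta, hT]
    have : (1 : ℝ) - (1 - 1/r) = 1/r := by ring
    rw [this]
    ring
  have hpow : (2 * beta n t) ^ (n - 1) = (1/(2 * Real.sqrt n))^(n-1) * r ^ (-(pexp n)) := by
    rw [hbeta, div_pow, div_eq_mul_inv, ← inv_pow, sqrt_pow_eq_rpow (by positivity) hn]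
    rw [one_div, Real.inv_rpow hr0.le, ← Real.rpow_neg hr0.le, one_div, inv_pow]
    ring
  calc cLB n * r ^ (-(pexp n)) * Real.exp r
      = Real.exp (r * t) * ((n : ℝ) * ((1/4) * (2 * beta n t) ^ (n - 1))) := by
        rw [hexp, hpow, cLB]
        ring
    _ ≤ Real.exp (r * t) * (volume.toSphere (cap n t)).toReal :=
        mul_le_mul_of_nonneg_left h3 (Real.exp_pos _).le
    _ ≤ I n r := h1


end

end YZaux

open YZaux in
set_option maxHeartbeats 2000000 in
/-- `φ` is strictly positive, radial, and satisfies two-sided bounds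
`c|x|^{-(n-1)/2} e^{|x|} ≤ φ(x) ≤ C|x|^{-(n-1)/2} e^{|x|}` for `|x| ≥ 1`. -/
theorem stmt_9 (n : ℕ) (hn : 2 ≤ n) :
    (∀ x : EuclideanSpace ℝ (Fin n), 0 < phi n x) ∧
    (∀ x y : EuclideanSpace ℝ (Fin n), ‖x‖ = ‖y‖ → phi n x = phi n y) ∧
    ∃ c C : ℝ, 0 < c ∧ c ≤ C ∧
      ∀ x : EuclideanSpace ℝ (Fin n), 1 ≤ ‖x‖ →
        c * ‖x‖ ^ (-((n : ℝ) - 1) / 2) * Real.exp ‖x‖ ≤ phi n x ∧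
        phi n x ≤ C * ‖x‖ ^ (-((n : ℝ) - 1) / 2) * Real.exp ‖x‖ := by
  haveI : NeZero n := ⟨by omega⟩
  have hn1 : 1 ≤ n := by omega
  haveI : Nontrivial (EuclideanSpace ℝ (Fin n)) := by
    refine nontrivial_of_ne (EuclideanSpace.single (0 : Fin n) (1:ℝ)) 0 ?_
    intro h
    have h2 := congrArg norm h
    rw [EuclideanSpace.norm_single, norm_zero] at h2
    norm_num at h2
  have hpos : ∀ x : EuclideanSpace ℝ (Fin n), 0 < phi n x := fun x =>
    integral_exp_inner_pos x
  have hrad : ∀ x y : EuclideanSpace ℝ (Fin n), ‖x‖ = ‖y‖ → phi n x = phi n y := fun x y h =>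
    integral_exp_inner_radial h
  have hphiI : ∀ r : ℝ, 0 ≤ r →
      phi n (r • EuclideanSpace.single (0 : Fin n) (1:ℝ)) = I n r := by
    intro r hr
    unfold phi I
    refine integral_congr_ae (Filter.Eventually.of_forall fun ω => ?_)
    have h : (inner ℝ (r • EuclideanSpace.single (0:Fin n) (1:ℝ))
        ((ω : EuclideanSpace ℝ (Fin n))) : ℝ) = r * (ω : EuclideanSpace ℝ (Fin n)) 0 := by
      rw [real_inner_smul_left, EuclideanSpace.inner_single_left]
      simp
    exact congrArg Real.exp h
  have hexpid : -((n : ℝ) - 1) / 2 = -(pexp n) := by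
    unfold pexp
    ring
  refine ⟨hpos, hrad, cLB n, max (Kc n * Real.Gamma (pexp n + 1)) (cLB n), cLB_pos,
    le_max_right _ _, fun x hx => ?_⟩
  have hr0 : (0:ℝ) < ‖x‖ := lt_of_lt_of_le one_pos hx
  have hxnorm : ‖(‖x‖ • EuclideanSpace.single (0 : Fin n) (1:ℝ))‖ = ‖x‖ := by
    rw [norm_smul, EuclideanSpace.norm_single]
    simp [abs_of_pos hr0]
  have hphix : phi n x = I n ‖x‖ := by
    rw [hrad x _ hxnorm.symm, hphiI ‖x‖ hr0.le]
  rw [hexpid, hphix]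
  constructor
  · exact I_ge hn1 hx
  · refine (I_le hn1 hx).trans ?_
    apply mul_le_mul_of_nonneg_right _ (Real.exp_pos _).le
    apply mul_le_mul_of_nonneg_right (le_max_left _ _) (Real.rpow_pos_of_pos hr0 _).le
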